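/- Let P* be positive and let v be a nonzero vector in the cone Q^n_B(P,P*) of possible velocities at a point P ≠ P* (i.e., v is the right-hand side of some master equation with nonnegative rates and equilibrium P*, evaluated at P). Then −v is not in Q^n_B(P,P*). Consequently the cone Q^n_B(P,P*) contains no whole straight line. -/
import Mathlib

open Finset

/-- The cone `Q^n_B(P,P*)` of possible velocities at `P` of Markov kinetics
with positive equilibrium `P*`. -/
def velocityConeB (n : ℕ) (pstar p : Fin n → ℝ) : Set (Fin n → ℝ) :=
  {v | ∃ q : Fin n → Fin n → ℝ,
    (∀ i j, i ≠ j → 0 ≤ q i j) ∧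
    (∀ i, ∑ j ∈ Finset.univ.filter (· ≠ i), q i j * pstar j =
      (∑ j ∈ Finset.univ.filter (· ≠ i), q j i) * pstar i) ∧
    (∀ i, v i = ∑ j ∈ Finset.univ.filter (· ≠ i),
      q i j * pstar j * (p j / pstar j - p i / pstar i))}

lemma swap_offdiag {n : ℕ} (g : Fin n → Fin n → ℝ) :
    ∑ i, ∑ j ∈ Finset.univ.filter (· ≠ i), g i j
    = ∑ i, ∑ j ∈ Finset.univ.filter (· ≠ i), g j i := by
  simp only [Finset.sum_filter]
  rw [Finset.sum_comm]
  apply Finset.sum_congr rfl; intro i _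
  apply Finset.sum_congr rfl; intro j _
  simp only [ne_comm]

lemma key_identity {n : ℕ} (pstar p : Fin n → ℝ)
    (q : Fin n → Fin n → ℝ)
    (hb : ∀ i, ∑ j ∈ Finset.univ.filter (· ≠ i), q i j * pstar j =
      (∑ j ∈ Finset.univ.filter (· ≠ i), q j i) * pstar i)
    (v : Fin n → ℝ)
    (hvdef : ∀ i, v i = ∑ j ∈ Finset.univ.filter (· ≠ i),
      q i j * pstar j * (p j / pstar j - p i / pstar i)) :
    2 * ∑ i, (p i / pstar i) * v i =
      - ∑ i, ∑ j ∈ Finset.univ.filter (· ≠ i),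
        q i j * pstar j * (p j / pstar j - p i / pstar i)^2 := by
  set x : Fin n → ℝ := fun i => p i / pstar i with hx
  have expand : 2 * ∑ i, x i * v i
      + ∑ i, ∑ j ∈ Finset.univ.filter (· ≠ i), q i j * pstar j * (x j - x i)^2
      = ∑ i, ∑ j ∈ Finset.univ.filter (· ≠ i), q i j * pstar j * ((x j)^2 - (x i)^2) := by
    rw [Finset.mul_sum, ← Finset.sum_add_distrib]
    apply Finset.sum_congr rfl; intro i _
    rw [hvdef i, Finset.mul_sum, Finset.mul_sum, ← Finset.sum_add_distrib]
    apply Finset.sum_congr rfl; intro j _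
    ring
  have hsplit : ∑ i, ∑ j ∈ Finset.univ.filter (· ≠ i), q i j * pstar j * ((x j)^2 - (x i)^2)
      = 0 := by
    have h1 : ∀ i, ∑ j ∈ Finset.univ.filter (· ≠ i), q i j * pstar j * ((x j)^2 - (x i)^2)
        = (∑ j ∈ Finset.univ.filter (· ≠ i), q i j * pstar j * (x j)^2)
          - ∑ j ∈ Finset.univ.filter (· ≠ i), q j i * pstar i * (x i)^2 := by
      intro i
      have h2 : ∑ j ∈ Finset.univ.filter (· ≠ i), q j i * pstar i * (x i)^2
          = (∑ j ∈ Finset.univ.filter (· ≠ i), q i j * pstar j) * (x i)^2 := by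
        rw [hb i, Finset.sum_mul, Finset.sum_mul]
      rw [h2, Finset.sum_mul, ← Finset.sum_sub_distrib]
      apply Finset.sum_congr rfl; intro j _; ring
    simp only [h1]
    rw [Finset.sum_sub_distrib, swap_offdiag (fun i j => q i j * pstar j * (x j)^2)]
    simp
  linarith [expand, hsplit]

theorem velocityConeB_no_line (n : ℕ) (pstar p : Fin n → ℝ)
    (hpos : ∀ i, 0 < pstar i) (v : Fin n → ℝ) (hv : v ≠ 0)
    (hmem : v ∈ velocityConeB n pstar p) :
    -v ∉ velocityConeB n pstar p := by
  intro hmem'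
  obtain ⟨q, hq, hb, hvdef⟩ := hmem
  obtain ⟨q', hq', hb', hvdef'⟩ := hmem'
  set x : Fin n → ℝ := fun i => p i / pstar i with hx
  have key := key_identity pstar p q hb v hvdef
  have key' := key_identity pstar p q' hb' (-v) hvdef'
  -- nonnegativity of the dissipation terms
  have hnn : ∀ (r : Fin n → Fin n → ℝ), (∀ i j, i ≠ j → 0 ≤ r i j) →
      ∀ i, ∀ j ∈ Finset.univ.filter (· ≠ i),
        0 ≤ r i j * pstar j * (p j / pstar j - p i / pstar i)^2 := by
    intro r hr i j hj
    have hji : j ≠ i := by simpa using hj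
    exact mul_nonneg (mul_nonneg (hr i j hji.symm) (hpos j).le) (sq_nonneg _)
  have hS : 0 ≤ ∑ i, ∑ j ∈ Finset.univ.filter (· ≠ i),
      q i j * pstar j * (p j / pstar j - p i / pstar i)^2 :=
    Finset.sum_nonneg fun i _ => Finset.sum_nonneg fun j hj => hnn q hq i j hj
  have hS' : 0 ≤ ∑ i, ∑ j ∈ Finset.univ.filter (· ≠ i),
      q' i j * pstar j * (p j / pstar j - p i / pstar i)^2 :=
    Finset.sum_nonneg fun i _ => Finset.sum_nonneg fun j hj => hnn q' hq' i j hj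
  have hL' : ∑ i, (p i / pstar i) * (-v) i = - ∑ i, (p i / pstar i) * v i := by
    rw [← Finset.sum_neg_distrib]
    apply Finset.sum_congr rfl; intro i _
    simp [mul_comm]
  rw [hL'] at key'
  -- so both sums are ≤ 0 and ≥ 0, hence L = 0 and S = 0
  have hSzero : ∑ i, ∑ j ∈ Finset.univ.filter (· ≠ i),
      q i j * pstar j * (p j / pstar j - p i / pstar i)^2 = 0 := by linarith
  -- each term vanishes
  have hterm : ∀ i, ∀ j ∈ Finset.univ.filter (· ≠ i),
      q i j * pstar j * (p j / pstar j - p i / pstar i)^2 = 0 := by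
    have h0 := (Finset.sum_eq_zero_iff_of_nonneg
      (fun i _ => Finset.sum_nonneg fun j hj => hnn q hq i j hj)).mp hSzero
    intro i j hj
    exact (Finset.sum_eq_zero_iff_of_nonneg
      (fun j hj => hnn q hq i j hj)).mp (h0 i (Finset.mem_univ i)) j hj
  -- hence v = 0
  apply hv
  funext i
  rw [hvdef i]
  apply Finset.sum_eq_zero
  intro j hj
  have h := hterm i j hj
  set d := p j / pstar j - p i / pstar i
  have : (q i j * pstar j * d) * d = 0 := by rw [mul_assoc, ← sq]; exact h
  rcases mul_eq_zero.mp this with h1 | h2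
  · exact h1
  · rw [h2, mul_zero]
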